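/- arXiv:1104.0028 — 2 statements merged into one kernel-verified Lean document; each statement's English description precedes it below -/
import Mathlib

section
/- Let G = ℝⁿ with length function ℓ(x) := √⟨x, Ax⟩ for a positive definite symmetric n×n matrix A. For p ∈ ℝⁿ let φ_p be the character φ_p(x) = e^{i⟨x,p⟩} of ℝⁿ. Then the Pontryagin dual length function ℓ̂(φ_p) := sup_{x ≠ 0} ℓ^{arc}(e^{i⟨x,p⟩})/ℓ(x) equals √⟨p, A⁻¹p⟩, where ℓ^{arc}(e^{iθ}) denotes the arclength distance from 1 to e^{iθ} on the unit circle (i.e. |θ| reduced mod 2π to [0,π]). -/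
open Matrix

/-- arclength distance from `1` to `e^{iθ}` on the unit circle:
`min_{k ∈ ℤ} |θ + 2πk|`. -/
noncomputable def larc (θ : ℝ) : ℝ := ⨅ k : ℤ, |θ + 2 * Real.pi * k|

lemma larc_bddBelow (θ : ℝ) : BddBelow (Set.range fun k : ℤ => |θ + 2 * Real.pi * k|) :=
  ⟨0, by rintro y ⟨k, rfl⟩; exact abs_nonneg _⟩

lemma larc_le_abs (θ : ℝ) : larc θ ≤ |θ| := by
  simpa [larc] using ciInf_le (larc_bddBelow θ) (0 : ℤ)

lemma larc_eq_self {θ : ℝ} (h0 : 0 ≤ θ) (hπ : θ ≤ Real.pi) : larc θ = θ := by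
  refine le_antisymm ((larc_le_abs θ).trans_eq (abs_of_nonneg h0)) (le_ciInf fun k => ?_)
  rcases lt_trichotomy k 0 with hk | hk | hk
  · have hk1 : k ≤ -1 := by omega
    have hk' : (k : ℝ) ≤ -1 := by exact_mod_cast hk1
    refine le_abs.2 (Or.inr ?_)
    nlinarith [Real.pi_pos]
  · simp [hk, abs_of_nonneg h0]
  · have hk1 : (1 : ℤ) ≤ k := hk
    have hk' : (1 : ℝ) ≤ (k : ℝ) := by exact_mod_cast hk1
    refine le_abs.2 (Or.inl ?_)
    nlinarith [Real.pi_pos]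

/-- Cauchy–Schwarz for the inner product induced by a positive definite matrix. -/
lemma cs_posdef {n : ℕ} {A : Matrix (Fin n) (Fin n) ℝ} (hA : A.PosDef) (x p : Fin n → ℝ) :
    |x ⬝ᵥ p| ≤ Real.sqrt (x ⬝ᵥ A.mulVec x) * Real.sqrt (p ⬝ᵥ A⁻¹.mulVec p) := by
  have hdet : IsUnit A.det := isUnit_iff_ne_zero.2 (ne_of_gt hA.det_pos)
  set y : Fin n → ℝ := A⁻¹.mulVec p with hy
  have hAy : A.mulVec y = p := by
    rw [hy, Matrix.mulVec_mulVec, Matrix.mul_nonsing_inv A hdet, Matrix.one_mulVec]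
  have hAt : Aᵀ = A := by
    ext i j
    rw [Matrix.transpose_apply]
    conv_lhs => rw [← hA.isHermitian.eq]
    simp [Matrix.conjTranspose_apply]
  have hsymm : ∀ u v : Fin n → ℝ, u ⬝ᵥ A.mulVec v = v ⬝ᵥ A.mulVec u := by
    intro u v
    rw [Matrix.dotProduct_mulVec, ← Matrix.mulVec_transpose, hAt]
    exact dotProduct_comm _ _
  have hnn : ∀ u : Fin n → ℝ, 0 ≤ u ⬝ᵥ A.mulVec u := by
    intro u
    rcases eq_or_ne u 0 with h | h
    · simp [h]
    · exact (by simpa using hA.dotProduct_mulVec_pos h : 0 < u ⬝ᵥ A.mulVec u).le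
  have key : (x ⬝ᵥ A.mulVec y) ^ 2 ≤ (x ⬝ᵥ A.mulVec x) * (y ⬝ᵥ A.mulVec y) := by
    rcases eq_or_ne y 0 with h | h
    · simp [h]
    · have hyy : 0 < y ⬝ᵥ A.mulVec y := by simpa using hA.dotProduct_mulVec_pos h
      set s : ℝ := (x ⬝ᵥ A.mulVec y) / (y ⬝ᵥ A.mulVec y) with hs
      have hexp : (x - s • y) ⬝ᵥ A.mulVec (x - s • y) =
          x ⬝ᵥ A.mulVec x - 2 * s * (x ⬝ᵥ A.mulVec y) + s ^ 2 * (y ⬝ᵥ A.mulVec y) := by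
        rw [Matrix.mulVec_sub, Matrix.mulVec_smul, sub_dotProduct,
          dotProduct_sub, dotProduct_sub, smul_dotProduct,
          smul_dotProduct, dotProduct_smul, dotProduct_smul,
          hsymm y x]
        simp only [smul_eq_mul]
        ring
      have h0 := hnn (x - s • y)
      rw [hexp, hs] at h0
      have h1 : (x ⬝ᵥ A.mulVec y) / (y ⬝ᵥ A.mulVec y) * (y ⬝ᵥ A.mulVec y) = x ⬝ᵥ A.mulVec y :=
        div_mul_cancel₀ _ (ne_of_gt hyy)
      nlinarith [sq_nonneg (x ⬝ᵥ A.mulVec y)]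
  have h2 : p ⬝ᵥ A⁻¹.mulVec p = y ⬝ᵥ A.mulVec y := by
    rw [hAy, ← hy]
    exact dotProduct_comm _ _
  have h1 : x ⬝ᵥ p = x ⬝ᵥ A.mulVec y := by rw [hAy]
  rw [h1, h2, ← Real.sqrt_mul (hnn x), ← Real.sqrt_sq_eq_abs]
  exact Real.sqrt_le_sqrt key

/-- for `ℝⁿ` with length `ℓ(x) = √⟨x,Ax⟩` (`A` symmetric positive definite),
the Pontryagin dual length of the character `φ_p(x) = e^{i⟨x,p⟩}` is `√⟨p,A⁻¹p⟩`. -/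
theorem pontryagin_dual_length_euclidean {n : ℕ}
    (A : Matrix (Fin n) (Fin n) ℝ) (hA : A.PosDef) (p : Fin n → ℝ) :
    (⨆ x : {x : Fin n → ℝ // x ≠ 0},
        larc ((x : Fin n → ℝ) ⬝ᵥ p) /
          Real.sqrt ((x : Fin n → ℝ) ⬝ᵥ A.mulVec (x : Fin n → ℝ))) =
      Real.sqrt (p ⬝ᵥ A⁻¹.mulVec p) := by
  set c : ℝ := Real.sqrt (p ⬝ᵥ A⁻¹.mulVec p) with hc
  have hub : ∀ x : {x : Fin n → ℝ // x ≠ 0},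
      larc ((x : Fin n → ℝ) ⬝ᵥ p) /
        Real.sqrt ((x : Fin n → ℝ) ⬝ᵥ A.mulVec (x : Fin n → ℝ)) ≤ c := by
    rintro ⟨x, hx⟩
    have hpos : 0 < x ⬝ᵥ A.mulVec x := by simpa using hA.dotProduct_mulVec_pos hx
    have hs : 0 < Real.sqrt (x ⬝ᵥ A.mulVec x) := Real.sqrt_pos.2 hpos
    rw [div_le_iff₀ hs]
    calc larc (x ⬝ᵥ p) ≤ |x ⬝ᵥ p| := larc_le_abs _
      _ ≤ Real.sqrt (x ⬝ᵥ A.mulVec x) * c := cs_posdef hA x p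
      _ = c * Real.sqrt (x ⬝ᵥ A.mulVec x) := mul_comm _ _
  by_cases hp : p = 0
  · subst hp
    have hcz : c = 0 := by rw [hc]; simp
    have hlarc0 : larc 0 = 0 := by simpa using larc_eq_self le_rfl Real.pi_pos.le
    have hz : ∀ x : {x : Fin n → ℝ // x ≠ 0},
        larc ((x : Fin n → ℝ) ⬝ᵥ (0 : Fin n → ℝ)) /
          Real.sqrt ((x : Fin n → ℝ) ⬝ᵥ A.mulVec (x : Fin n → ℝ)) = 0 := by
      intro x
      simp [dotProduct_zero, hlarc0]
    simp only [hz, hcz]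
    rcases isEmpty_or_nonempty {x : Fin n → ℝ // x ≠ 0} with h | h
    · rw [iSup_of_empty']
      exact Real.sSup_empty
    · exact ciSup_const
  · have hNe : Nonempty {x : Fin n → ℝ // x ≠ 0} := ⟨⟨p, hp⟩⟩
    have hs : 0 < p ⬝ᵥ A⁻¹.mulVec p := by simpa using hA.inv.dotProduct_mulVec_pos hp
    have hcpos : 0 < c := Real.sqrt_pos.2 hs
    refine le_antisymm (ciSup_le hub) ?_
    set t : ℝ := Real.pi / (p ⬝ᵥ A⁻¹.mulVec p + 1) with ht
    have htpos : 0 < t := div_pos Real.pi_pos (by linarith)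
    set x₀ : Fin n → ℝ := t • A⁻¹.mulVec p with hx₀
    have hdet : IsUnit A.det := isUnit_iff_ne_zero.2 (ne_of_gt hA.det_pos)
    have hdot : x₀ ⬝ᵥ p = t * (p ⬝ᵥ A⁻¹.mulVec p) := by
      rw [hx₀, smul_dotProduct, dotProduct_comm]
      simp [smul_eq_mul]
    have hAx : A.mulVec x₀ = t • p := by
      rw [hx₀, Matrix.mulVec_smul, Matrix.mulVec_mulVec, Matrix.mul_nonsing_inv A hdet,
        Matrix.one_mulVec]
    have hquad : x₀ ⬝ᵥ A.mulVec x₀ = t ^ 2 * (p ⬝ᵥ A⁻¹.mulVec p) := by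
      rw [hAx, dotProduct_smul, smul_eq_mul, hdot]
      ring
    have hx₀ne : x₀ ≠ 0 := by
      intro h
      have h0 : x₀ ⬝ᵥ p = 0 := by simp [h]
      rw [hdot] at h0
      nlinarith
    refine le_ciSup_of_le ⟨c, fun y hy => ?_⟩ ⟨x₀, hx₀ne⟩ ?_
    · obtain ⟨x, rfl⟩ := hy
      exact hub x
    · have harg : larc (x₀ ⬝ᵥ p) = t * (p ⬝ᵥ A⁻¹.mulVec p) := by
        rw [hdot]
        refine larc_eq_self (by positivity) ?_
        rw [ht, div_mul_eq_mul_div, mul_comm, div_le_iff₀ (by linarith)]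
        nlinarith [Real.pi_pos]
      have hsqrt : Real.sqrt (x₀ ⬝ᵥ A.mulVec x₀) = t * c := by
        rw [hquad, Real.sqrt_mul (by positivity), Real.sqrt_sq htpos.le, hc]
      show c ≤ larc (x₀ ⬝ᵥ p) / Real.sqrt (x₀ ⬝ᵥ A.mulVec x₀)
      rw [harg, hsqrt, le_div_iff₀ (by positivity)]
      have hms : c * c = p ⬝ᵥ A⁻¹.mulVec p := Real.mul_self_sqrt hs.le
      nlinarith
end

section
/- Let H be an infinite-dimensional Hilbert space and θ ∈ (0, 2π). Then there is no differentiable path γ : [0,1] → U(H) with γ(0) = id, γ(1) = e^{iθ}·id, and γ'(t) Hilbert–Schmidt for all t. Consequently the arclength distance d^{arc}(id, e^{iθ} id) = +∞. -/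
open scoped ENNReal

/-- a continuous linear operator on a Hilbert space is Hilbert–Schmidt if
`∑ ‖A(e_i)‖²` converges for some Hilbert basis `(e_i)`. -/
def IsHilbertSchmidt {H : Type*} [NormedAddCommGroup H] [InnerProductSpace ℂ H]
    (A : H →L[ℂ] H) : Prop :=
  ∃ (ι : Type) (b : HilbertBasis ι ℂ H), Summable fun i => ‖A (b i)‖ ^ 2

section NoHSPathAux

open Metric Set Filter Topology



variable {H : Type*} [NormedAddCommGroup H] [InnerProductSpace ℂ H] [CompleteSpace H]

omit [CompleteSpace H] in
lemma isCompactOperator_of_range_le (f : H →L[ℂ] H) (V : Submodule ℂ H)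
    [FiniteDimensional ℂ V] (hV : ∀ x, f x ∈ V) : IsCompactOperator f := by
  let g : H →L[ℂ] V := f.codRestrict V hV
  have hsub : closure (g '' closedBall 0 1) ⊆ closedBall 0 ‖g‖ := by
    refine closure_minimal ?_ Metric.isClosed_closedBall
    rintro - ⟨x, hx, rfl⟩
    simpa [mem_closedBall, dist_eq_norm] using
      (g.le_opNorm x).trans (by
        have : ‖x‖ ≤ 1 := by simpa [mem_closedBall, dist_eq_norm] using hx
        nlinarith [norm_nonneg g])
  have hKc : IsCompact (closure (g '' closedBall 0 1)) :=
    (isCompact_closedBall (0 : V) ‖g‖).of_isClosed_subset isClosed_closure hsub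
  refine ⟨Subtype.val '' closure (g '' closedBall 0 1), hKc.image continuous_subtype_val, ?_⟩
  refine Filter.mem_of_superset (Metric.closedBall_mem_nhds (0 : H) one_pos) ?_
  intro x hx
  exact ⟨g x, subset_closure ⟨x, hx, rfl⟩, rfl⟩

lemma IsHilbertSchmidt.isCompactOperator {A : H →L[ℂ] H} (hA : IsHilbertSchmidt A) :
    IsCompactOperator A := by
  classical
  obtain ⟨ι, b, hsum⟩ := hA
  set T : Finset ι → (H →L[ℂ] H) :=
    fun F => ∑ i ∈ F, (innerSL ℂ (b i)).smulRight (A (b i)) with hTdef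
  have key : ∀ (F : Finset ι) (x : H),
      ‖A x - T F x‖ ≤ Real.sqrt (∑' i : {i // i ∉ F}, ‖A (b i)‖ ^ 2) * ‖x‖ := by
    intro F x
    set tail : ℝ := ∑' i : {i // i ∉ F}, ‖A (b i)‖ ^ 2 with htail
    have hsub : Summable fun j : {i // i ∉ F} => ‖A (b j)‖ ^ 2 := hsum.subtype _
    have hx : HasSum (fun i => b.repr x i • A (b i)) (A x) := by
      have := (A.hasSum (b.hasSum_repr x))
      simpa using this
    have hTx : T F x = ∑ i ∈ F, b.repr x i • A (b i) := by
      simp [hTdef, ContinuousLinearMap.sum_apply, b.repr_apply_apply]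
    have ht0 : (0:ℝ) ≤ tail := tsum_nonneg fun _ => sq_nonneg _
    have hcompl : HasSum (fun j : {i // i ∉ F} => b.repr x j • A (b j))
        (A x - ∑ i ∈ F, b.repr x i • A (b i)) := by
      have h := (F.hasSum_compl_iff (f := fun i => b.repr x i • A (b i))
        (a := A x - ∑ i ∈ F, b.repr x i • A (b i)))
      rw [h]
      simpa using hx
    have bound : ∀ s : Finset {i // i ∉ F},
        ∑ j ∈ s, ‖b.repr x j • A (b j)‖ ≤ Real.sqrt tail * ‖x‖ := by
      intro s
      have hcs := Finset.sum_mul_sq_le_sq_mul_sq s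
        (fun j => ‖b.repr x (j : {i // i ∉ F})‖) (fun j => ‖A (b (j : {i // i ∉ F}))‖)
      have hbessel : ∑ j ∈ s, ‖b.repr x (j : {i // i ∉ F})‖ ^ 2 ≤ ‖x‖ ^ 2 := by
        have horth : Orthonormal ℂ (fun j : {i // i ∉ F} => b j) :=
          b.orthonormal.comp _ Subtype.val_injective
        have := horth.sum_inner_products_le (s := s) x
        simpa [b.repr_apply_apply] using this
      have htailb : ∑ j ∈ s, ‖A (b (j : {i // i ∉ F}))‖ ^ 2 ≤ tail :=
        Summable.sum_le_tsum s (fun i _ => sq_nonneg _) hsub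
      have hnn : (0:ℝ) ≤ ∑ j ∈ s, ‖b.repr x (j : {i // i ∉ F})‖ * ‖A (b (j : {i // i ∉ F}))‖ :=
        Finset.sum_nonneg fun j _ => mul_nonneg (norm_nonneg _) (norm_nonneg _)
      calc ∑ j ∈ s, ‖b.repr x j • A (b (j : {i // i ∉ F}))‖
          = ∑ j ∈ s, ‖b.repr x (j : {i // i ∉ F})‖ * ‖A (b (j : {i // i ∉ F}))‖ := by
            simp [norm_smul]
        _ ≤ Real.sqrt ((∑ j ∈ s, ‖b.repr x (j : {i // i ∉ F})‖ ^ 2)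
              * ∑ j ∈ s, ‖A (b (j : {i // i ∉ F}))‖ ^ 2) := by
            rw [← Real.sqrt_sq hnn]
            exact Real.sqrt_le_sqrt hcs
        _ ≤ Real.sqrt (‖x‖ ^ 2 * tail) := by
            apply Real.sqrt_le_sqrt
            exact mul_le_mul hbessel htailb (Finset.sum_nonneg fun j _ => sq_nonneg _)
              (sq_nonneg _)
        _ = Real.sqrt tail * ‖x‖ := by
            rw [mul_comm, Real.sqrt_mul ht0, Real.sqrt_sq (norm_nonneg _)]
    have hsumnorm : Summable fun j : {i // i ∉ F} => ‖b.repr x j • A (b j)‖ :=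
      summable_of_sum_le (fun j => norm_nonneg _) bound
    calc ‖A x - T F x‖
        = ‖∑' j : {i // i ∉ F}, b.repr x j • A (b j)‖ := by rw [hTx, hcompl.tsum_eq]
      _ ≤ ∑' j : {i // i ∉ F}, ‖b.repr x j • A (b j)‖ := norm_tsum_le_tsum_norm hsumnorm
      _ ≤ Real.sqrt tail * ‖x‖ := Summable.tsum_le_of_sum_le hsumnorm bound
  have hop : ∀ F : Finset ι, ‖A - T F‖ ≤ Real.sqrt (∑' i : {i // i ∉ F}, ‖A (b i)‖ ^ 2) :=
    fun F => ContinuousLinearMap.opNorm_le_bound _ (Real.sqrt_nonneg _)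
      (fun x => by simpa using key F x)
  have htails : Tendsto (fun F : Finset ι => ∑' i : {i // i ∉ F}, ‖A (b i)‖ ^ 2)
      atTop (𝓝 0) := tendsto_tsum_compl_atTop_zero (fun i => ‖A (b i)‖ ^ 2)
  have hsqrt : Tendsto (fun F : Finset ι =>
      Real.sqrt (∑' i : {i // i ∉ F}, ‖A (b i)‖ ^ 2)) atTop (𝓝 0) := by
    have := (Real.continuous_sqrt.tendsto 0).comp htails
    simpa [Function.comp_def] using this
  have hnorm0 : Tendsto (fun F : Finset ι => ‖T F - A‖) atTop (𝓝 0) := by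
    apply squeeze_zero (fun F => norm_nonneg _) (fun F => ?_) hsqrt
    rw [norm_sub_rev]
    exact hop F
  have hT : Tendsto T atTop (𝓝 A) := by
    rw [tendsto_iff_norm_sub_tendsto_zero]
    exact hnorm0
  refine isCompactOperator_of_tendsto hT (Filter.Eventually.of_forall fun F => ?_)
  refine isCompactOperator_of_range_le (T F)
    (Submodule.span ℂ ((F.image fun i => A (b i) : Finset H) : Set H)) fun x => ?_
  rw [hTdef]
  simp only [ContinuousLinearMap.sum_apply, ContinuousLinearMap.smulRight_apply]
  exact Submodule.sum_mem _ fun i hi => Submodule.smul_mem _ _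
    (Submodule.subset_span (by simp [Finset.mem_image]; exact ⟨i, hi, rfl⟩))



variable {H : Type*} [NormedAddCommGroup H] [InnerProductSpace ℂ H] [CompleteSpace H]

/-- the compact operators as a real submodule of `B(H)`. -/
def compactSubmodule (H : Type*) [NormedAddCommGroup H] [InnerProductSpace ℂ H] :
    Submodule ℝ (H →L[ℂ] H) where
  carrier := { f | IsCompactOperator f }
  add_mem' hf hg := hf.add hg
  zero_mem' := isCompactOperator_zero
  smul_mem' c _ hf := hf.smul c

lemma exp_theta_ne_one {θ : ℝ} (hθ : θ ∈ Set.Ioo (0:ℝ) (2 * Real.pi)) :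
    Complex.exp (θ * Complex.I) ≠ 1 := by
  intro h
  rw [Complex.exp_eq_one_iff] at h
  obtain ⟨n, hn⟩ := h
  have hI : (θ : ℂ) = n * (2 * Real.pi) := by
    have := mul_right_cancel₀ Complex.I_ne_zero (by
      rw [hn]; ring_nf : (θ : ℂ) * Complex.I = ((n : ℂ) * (2 * Real.pi)) * Complex.I)
    exact this
  have hr : θ = (n : ℝ) * (2 * Real.pi) := by exact_mod_cast hI
  have hpi : (0:ℝ) < 2 * Real.pi := by positivity
  have h1 : (0:ℝ) < (n:ℝ) := by
    by_contra hcon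
    push_neg at hcon
    nlinarith [hθ.1]
  have h2 : (n:ℝ) < 1 := by
    by_contra hcon
    push_neg at hcon
    nlinarith [hθ.2]
  have h1' : (1:ℤ) ≤ n := by exact_mod_cast h1
  have h2' : (n:ℤ) < 1 := by exact_mod_cast h2
  omega

theorem no_HS_path_to_scalar'
    (hinf : ¬ FiniteDimensional ℂ H)
    (θ : ℝ) (hθ : θ ∈ Set.Ioo (0:ℝ) (2 * Real.pi)) :
    ¬ ∃ γ : ℝ → (H →L[ℂ] H),
        (∀ t ∈ Set.Icc (0:ℝ) 1, γ t ∈ unitary (H →L[ℂ] H)) ∧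
        γ 0 = 1 ∧ γ 1 = Complex.exp (θ * Complex.I) • (1 : H →L[ℂ] H) ∧
        (∀ t ∈ Set.Icc (0:ℝ) 1, ∃ D : H →L[ℂ] H,
          HasDerivAt γ D t ∧ IsHilbertSchmidt D) := by
  rintro ⟨γ, -, h0, h1, hD⟩
  set S : Submodule ℝ (H →L[ℂ] H) := compactSubmodule H with hSdef
  haveI hSclosed : IsClosed (S : Set (H →L[ℂ] H)) := isClosed_setOf_isCompactOperator
  let π : (H →L[ℂ] H) →L[ℝ] ((H →L[ℂ] H) ⧸ S) :=
    LinearMap.mkContinuous S.mkQ 1 (fun m => by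
      simpa using Submodule.Quotient.norm_mk_le S m)
  have hcont : ContinuousOn (fun t => π (γ t)) (Set.Icc (0:ℝ) 1) := by
    intro t ht
    obtain ⟨D, hd, -⟩ := hD t ht
    exact (π.continuous.continuousAt.comp hd.continuousAt).continuousWithinAt
  have hderiv : ∀ t ∈ Set.Ico (0:ℝ) 1, HasDerivWithinAt (fun t => π (γ t)) 0 (Set.Ici t) t := by
    intro t ht
    obtain ⟨D, hd, hHS⟩ := hD t (Set.Ico_subset_Icc_self ht)
    have hDS : D ∈ S := hHS.isCompactOperator
    have : HasDerivAt (fun t => π (γ t)) (π D) t := π.hasFDerivAt.comp_hasDerivAt t hd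
    have hπD : π D = 0 := by
      show S.mkQ D = 0
      rw [Submodule.mkQ_apply, Submodule.Quotient.mk_eq_zero]
      exact hDS
    rw [hπD] at this
    exact this.hasDerivWithinAt
  have h10 : π (γ 1) = π (γ 0) :=
    constant_of_has_deriv_right_zero hcont hderiv 1 (by norm_num)
  have hmem : γ 1 - γ 0 ∈ S := by
    have : (Submodule.Quotient.mk (γ 1) : (H →L[ℂ] H) ⧸ S) = Submodule.Quotient.mk (γ 0) := h10
    rwa [Submodule.Quotient.eq] at this
  set c : ℂ := Complex.exp (θ * Complex.I) - 1 with hc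
  have hcne : c ≠ 0 := sub_ne_zero.2 (exp_theta_ne_one hθ)
  have hmem' : IsCompactOperator (c • (1 : H →L[ℂ] H)) := by
    have : γ 1 - γ 0 = c • (1 : H →L[ℂ] H) := by
      rw [h0, h1, hc, sub_smul, one_smul]
    rwa [this] at hmem
  have hid : IsCompactOperator (fun x : H => x) := by
    have h2 := hmem'.smul c⁻¹
    have heq : (c⁻¹ • ⇑(c • (1 : H →L[ℂ] H))) = fun x : H => x := by
      funext x
      simp [smul_smul, inv_mul_cancel₀ hcne]
    rwa [heq] at h2
  obtain ⟨K, hK, hKmem⟩ := hid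
  have hKmem' : K ∈ 𝓝 (0 : H) := by simpa using hKmem
  obtain ⟨r, hr, hball⟩ := Metric.nhds_basis_closedBall.mem_iff.1 hKmem'
  have hcomp : IsCompact (Metric.closedBall (0:H) r) :=
    hK.of_isClosed_subset Metric.isClosed_closedBall hball
  exact hinf (FiniteDimensional.of_isCompact_closedBall₀ ℂ hr hcomp)

end NoHSPathAux


/-- on an infinite dimensional Hilbert space, there is no differentiable
path of unitaries with Hilbert–Schmidt derivative from `id` to `e^{iθ}·id` for
`θ ∈ (0,2π)`; consequently the arclength distance (an infimum over the empty set of such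
paths) is `+∞`. -/
theorem no_HS_path_to_scalar {H : Type*} [NormedAddCommGroup H]
    [InnerProductSpace ℂ H] [CompleteSpace H]
    (hinf : ¬ FiniteDimensional ℂ H)
    (θ : ℝ) (hθ : θ ∈ Set.Ioo (0:ℝ) (2 * Real.pi)) :
    (¬ ∃ γ : ℝ → (H →L[ℂ] H),
        (∀ t ∈ Set.Icc (0:ℝ) 1, γ t ∈ unitary (H →L[ℂ] H)) ∧
        γ 0 = 1 ∧ γ 1 = Complex.exp (θ * Complex.I) • (1 : H →L[ℂ] H) ∧
        (∀ t ∈ Set.Icc (0:ℝ) 1, ∃ D : H →L[ℂ] H,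
          HasDerivAt γ D t ∧ IsHilbertSchmidt D)) ∧
    (∀ arclen : (ℝ → (H →L[ℂ] H)) → ℝ≥0∞,
      sInf (arclen '' {γ : ℝ → (H →L[ℂ] H) |
        (∀ t ∈ Set.Icc (0:ℝ) 1, γ t ∈ unitary (H →L[ℂ] H)) ∧
        γ 0 = 1 ∧ γ 1 = Complex.exp (θ * Complex.I) • (1 : H →L[ℂ] H) ∧
        (∀ t ∈ Set.Icc (0:ℝ) 1, ∃ D : H →L[ℂ] H,
          HasDerivAt γ D t ∧ IsHilbertSchmidt D)}) = ⊤) := by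
  have hno := no_HS_path_to_scalar' hinf θ hθ
  refine ⟨hno, fun arclen => ?_⟩
  have hempty : {γ : ℝ → (H →L[ℂ] H) |
      (∀ t ∈ Set.Icc (0:ℝ) 1, γ t ∈ unitary (H →L[ℂ] H)) ∧
      γ 0 = 1 ∧ γ 1 = Complex.exp (θ * Complex.I) • (1 : H →L[ℂ] H) ∧
      (∀ t ∈ Set.Icc (0:ℝ) 1, ∃ D : H →L[ℂ] H,
        HasDerivAt γ D t ∧ IsHilbertSchmidt D)} = ∅ :=
    Set.eq_empty_iff_forall_notMem.2 fun γ hγ => hno ⟨γ, hγ⟩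
  rw [hempty, Set.image_empty, sInf_empty]
end
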